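/- Let n, s ∈ ℕ. A matrix pencil K(λ) ∈ F[λ]^{sn×(s+1)n} satisfying K(λ)(Λ_s(λ)^T ⊗ I_n) = 0 is a minimal basis dual to Λ_s(λ) ⊗ I_n if and only if K(λ) = B (L_s(λ) ⊗ I_n) for some nonsingular matrix B ∈ F^{sn×sn}. -/

import Mathlib

open Polynomial Matrix

/-- The row of a polynomial matrix viewed as a vector of rational functions. -/
noncomputable def ratRow {F : Type*} [Field F] {ν : Type*} (v : ν → Polynomial F) :
    ν → RatFunc F :=
  fun j => algebraMap (Polynomial F) (RatFunc F) (v j)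

/-- The rational subspace spanned by the rows of a polynomial matrix. -/
noncomputable def rowSpan {F : Type*} [Field F] {ρ ν : Type*}
    (Q : Matrix ρ ν (Polynomial F)) : Submodule (RatFunc F) (ν → RatFunc F) :=
  Submodule.span (RatFunc F) (Set.range fun i => ratRow (Q i))

/-- Degree of a polynomial row vector: the maximum of the degrees of its entries. -/
noncomputable def rowDegree {F : Type*} [Field F] {ν : Type*} [Fintype ν]
    (v : ν → Polynomial F) : ℕ :=
  Finset.univ.sup fun j => (v j).natDegree

/-- The order of a polynomial matrix: the sum of its row degrees. -/
noncomputable def polyOrder {F : Type*} [Field F] {ρ ν : Type*} [Fintype ρ] [Fintype ν]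
    (Q : Matrix ρ ν (Polynomial F)) : ℕ :=
  ∑ i, rowDegree (Q i)

/-- `Q` is a minimal basis: its rows are linearly independent over the field of rational
functions (hence a polynomial basis of the rational subspace they span), and any other
polynomial matrix whose rows form a polynomial basis of the same subspace has order
at least the order of `Q`. -/
def IsMinimalBasis {F : Type*} [Field F] {ρ ν : Type*} [Fintype ρ] [Fintype ν]
    (Q : Matrix ρ ν (Polynomial F)) : Prop :=
  LinearIndependent (RatFunc F) (fun i => ratRow (Q i)) ∧
  ∀ (m : ℕ) (R : Matrix (Fin m) ν (Polynomial F)),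
    LinearIndependent (RatFunc F) (fun i => ratRow (R i)) →
    rowSpan R = rowSpan Q → polyOrder Q ≤ polyOrder R

/-- The pencil `L_s(λ)` with `-1` on the diagonal and `λ` on the superdiagonal. -/
noncomputable def Lpoly (F : Type*) [Field F] (s : ℕ) :
    Matrix (Fin s) (Fin (s+1)) (Polynomial F) :=
  Matrix.of fun i j =>
    if (j : ℕ) = (i : ℕ) then -1 else if (j : ℕ) = (i : ℕ) + 1 then X else 0

/-- The row vector `Λ_s(λ) = [λ^s, λ^{s-1}, ..., λ, 1]`. -/
noncomputable def LamPoly (F : Type*) [Field F] (s : ℕ) :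
    Matrix (Fin 1) (Fin (s+1)) (Polynomial F) :=
  Matrix.of fun _ j => X ^ (s - (j : ℕ))

open Kronecker

set_option synthInstance.maxHeartbeats 1000000
set_option maxHeartbeats 1000000

namespace WingAux

variable {F : Type*} [Field F] {s n : ℕ}

/-- two-term sum extraction -/
lemma sum_split {ι M : Type*} [Fintype ι] [DecidableEq ι] [AddCommMonoid M]
    (f : ι → M) (a b : ι)
    (h : ∀ j, f j = (if j = a then f a else 0) + (if j = b then f b else 0)) :
    ∑ j, f j = f a + f b := by
  rw [Finset.sum_congr rfl fun j _ => h j, Finset.sum_add_distrib]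
  rw [Finset.sum_ite_eq' Finset.univ a fun _ => f a,
    Finset.sum_ite_eq' Finset.univ b fun _ => f b]
  simp

section CoeffRel

variable {p : Fin (s+1) → Polynomial F}

lemma rel_last (hsum : ∑ j, p j * X ^ (s - (j:ℕ)) = 0) : (p (Fin.last s)).coeff 0 = 0 := by
  have h := congrArg (fun q : Polynomial F => q.coeff 0) hsum
  simp only [finset_sum_coeff, coeff_mul_X_pow', coeff_zero] at h
  have h2 : ∑ j : Fin (s+1), (if s - (j:ℕ) ≤ 0 then (p j).coeff (0 - (s - (j:ℕ))) else 0)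
      = (p (Fin.last s)).coeff 0 := by
    rw [Finset.sum_eq_single (Fin.last s)]
    · simp
    · intro j _ hj
      have hjs : (j:ℕ) < s := Fin.val_lt_last hj
      rw [if_neg (by omega)]
    · simp
  rw [h2] at h
  exact h

lemma rel_zero (hdeg : ∀ j, (p j).natDegree ≤ 1)
    (hsum : ∑ j, p j * X ^ (s - (j:ℕ)) = 0) : (p 0).coeff 1 = 0 := by
  have h := congrArg (fun q : Polynomial F => q.coeff (s+1)) hsum
  simp only [finset_sum_coeff, coeff_mul_X_pow', coeff_zero] at h
  have h2 : ∑ j : Fin (s+1), (if s - (j:ℕ) ≤ s+1 then (p j).coeff (s+1 - (s - (j:ℕ))) else 0)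
      = (p 0).coeff 1 := by
    rw [Finset.sum_eq_single (0 : Fin (s+1))]
    · rw [if_pos (by omega)]
      norm_num
    · intro j _ hj
      have hj1 : 1 ≤ (j:ℕ) := by
        rcases Nat.eq_zero_or_pos (j:ℕ) with h0 | h0
        · exact absurd (Fin.ext (h0.trans (Fin.val_zero _).symm) : j = 0) hj
        · exact h0
      have hjs : (j:ℕ) < s + 1 := j.isLt
      rw [if_pos (by omega)]
      exact coeff_eq_zero_of_natDegree_lt (lt_of_le_of_lt (hdeg j) (by omega))
    · simp
  rw [h2] at h
  exact h

lemma rel_mid (hdeg : ∀ j, (p j).natDegree ≤ 1)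
    (hsum : ∑ j, p j * X ^ (s - (j:ℕ)) = 0) (i : Fin s) :
    (p i.castSucc).coeff 0 + (p i.succ).coeff 1 = 0 := by
  have his : (i:ℕ) < s := i.isLt
  have h := congrArg (fun q : Polynomial F => q.coeff (s - (i:ℕ))) hsum
  simp only [finset_sum_coeff, coeff_mul_X_pow', coeff_zero] at h
  have h2 : ∑ j : Fin (s+1),
      (if s - (j:ℕ) ≤ s - (i:ℕ) then (p j).coeff ((s - (i:ℕ)) - (s - (j:ℕ))) else 0)
      = (p i.castSucc).coeff 0 + (p i.succ).coeff 1 := by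
    have key := sum_split
      (fun j : Fin (s+1) =>
        if s - (j:ℕ) ≤ s - (i:ℕ) then (p j).coeff ((s - (i:ℕ)) - (s - (j:ℕ))) else 0)
      i.castSucc i.succ ?_
    · rw [key]
      have e1 : ((i.castSucc : Fin (s+1)) : ℕ) = (i:ℕ) := Fin.coe_castSucc i
      have e2 : ((i.succ : Fin (s+1)) : ℕ) = (i:ℕ) + 1 := Fin.val_succ i
      rw [e1, e2, if_pos (le_refl _), if_pos (by omega)]
      congr 2
      · omega
      · omega
    · intro j
      by_cases hA : j = i.castSucc
      · subst hA
        rw [if_pos rfl, if_neg (Fin.castSucc_lt_succ : i.castSucc < i.succ).ne, add_zero]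
      · by_cases hB : j = i.succ
        · subst hB
          rw [if_pos rfl, if_neg ((Fin.castSucc_lt_succ : i.castSucc < i.succ).ne' : i.succ ≠ i.castSucc), zero_add]
        · rw [if_neg hA, if_neg hB, add_zero]
          have hj1 : (j:ℕ) ≠ (i:ℕ) := by
            intro hc
            exact hA (Fin.ext (by rw [hc, Fin.coe_castSucc]))
          have hj2 : (j:ℕ) ≠ (i:ℕ) + 1 := by
            intro hc
            exact hB (Fin.ext (by rw [hc, Fin.val_succ]))
          have hjs : (j:ℕ) < s + 1 := j.isLt
          show (if s - (j:ℕ) ≤ s - (i:ℕ) then (p j).coeff ((s - (i:ℕ)) - (s - (j:ℕ))) else 0) = 0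
          by_cases hle : s - (j:ℕ) ≤ s - (i:ℕ)
          · rw [if_pos hle]
            exact coeff_eq_zero_of_natDegree_lt (lt_of_le_of_lt (hdeg j) (by omega))
          · rw [if_neg hle]
  rw [h2] at h
  exact h

end CoeffRel

set_option synthInstance.maxHeartbeats 1000000
set_option maxHeartbeats 1000000

noncomputable def phiF (F : Type*) [Field F] : F →+* RatFunc F :=
  (algebraMap (Polynomial F) (RatFunc F)).comp (C : F →+* Polynomial F)

lemma wing_rows (K : Matrix (Fin s × Fin n) (Fin (s+1) × Fin n) (Polynomial F))
    (hwing : K * ((LamPoly F s)ᵀ ⊗ₖ (1 : Matrix (Fin n) (Fin n) (Polynomial F))) = 0)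
    (r : Fin s × Fin n) (u : Fin n) :
    ∑ j : Fin (s+1), K r (j, u) * X ^ (s - (j:ℕ)) = 0 := by
  have h := congrFun (congrFun hwing r) ((0 : Fin 1), u)
  simp only [Matrix.mul_apply, Matrix.zero_apply, kroneckerMap_apply, transpose_apply,
    LamPoly, Matrix.of_apply, Matrix.one_apply, Fintype.sum_prod_type,
    mul_ite, mul_one, mul_zero, Finset.sum_ite_eq', Finset.mem_univ, if_true] at h
  exact h

noncomputable def Bmat (K : Matrix (Fin s × Fin n) (Fin (s+1) × Fin n) (Polynomial F)) :
    Matrix (Fin s × Fin n) (Fin s × Fin n) F :=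
  Matrix.of fun r x => (K r (x.1.succ, x.2)).coeff 1

lemma LI_mul_apply (B : Matrix (Fin s × Fin n) (Fin s × Fin n) F)
    (r : Fin s × Fin n) (j : Fin (s+1)) (u : Fin n) :
    (B.map C * (Lpoly F s ⊗ₖ (1 : Matrix (Fin n) (Fin n) (Polynomial F)))) r (j, u)
      = ∑ i : Fin s, C (B r (i, u)) * Lpoly F s i j := by
  rw [Matrix.mul_apply, Fintype.sum_prod_type]
  simp only [kroneckerMap_apply, Matrix.map_apply, Matrix.one_apply, mul_ite, mul_one,
    mul_zero, Finset.sum_ite_eq', Finset.mem_univ, if_true]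

lemma factor (K : Matrix (Fin s × Fin n) (Fin (s+1) × Fin n) (Polynomial F))
    (hpencil : ∀ r c, (K r c).natDegree ≤ 1)
    (hwing : K * ((LamPoly F s)ᵀ ⊗ₖ (1 : Matrix (Fin n) (Fin n) (Polynomial F))) = 0) :
    K = (Bmat K).map C * (Lpoly F s ⊗ₖ (1 : Matrix (Fin n) (Fin n) (Polynomial F))) := by
  refine Matrix.ext fun r c => ?_
  obtain ⟨j, u⟩ := c
  rw [LI_mul_apply]
  have hdeg : ∀ jj : Fin (s+1), (K r (jj, u)).natDegree ≤ 1 := fun jj => hpencil r _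
  have hrow := wing_rows K hwing r u
  have hb0 : (K r ((0 : Fin (s+1)), u)).coeff 1 = 0 :=
    rel_zero (p := fun jj => K r (jj, u)) hdeg hrow
  have hlast : (K r (Fin.last s, u)).coeff 0 = 0 :=
    rel_last (p := fun jj => K r (jj, u)) hrow
  have hmid : ∀ i : Fin s, (K r (i.castSucc, u)).coeff 0 + (K r (i.succ, u)).coeff 1 = 0 :=
    rel_mid (p := fun jj => K r (jj, u)) hdeg hrow
  induction j using Fin.lastCases with
  | last =>
    have hK : K r (Fin.last s, u)
        = C ((K r (Fin.last s, u)).coeff 1) * X + C ((K r (Fin.last s, u)).coeff 0) :=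
      eq_X_add_C_of_natDegree_le_one (hpencil r _)
    rcases Nat.eq_zero_or_pos s with hs | hs
    · subst hs
      rw [Finset.univ_eq_empty, Finset.sum_empty, hK, hlast]
      have h0 : (K r ((Fin.last 0 : Fin 1), u)).coeff 1 = 0 := hb0
      rw [h0]
      simp
    · set i1 : Fin s := ⟨s-1, by omega⟩ with hi1
      have hsum : (∑ i : Fin s, C (Bmat K r (i, u)) * Lpoly F s i (Fin.last s))
          = C (Bmat K r (i1, u)) * X := by
        rw [Finset.sum_eq_single i1]
        · simp only [Lpoly, Matrix.of_apply, Fin.val_last, hi1]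
          rw [if_neg (by omega), if_pos (by omega)]
        · intro i _ hi
          have hne : (i:ℕ) ≠ s - 1 := fun hc => hi (Fin.ext (by rw [hc, hi1]))
          have his := i.isLt
          simp only [Lpoly, Matrix.of_apply, Fin.val_last]
          rw [if_neg (by omega), if_neg (by omega), mul_zero]
        · simp
      rw [hsum]
      have hsucc : i1.succ = Fin.last s := Fin.ext (by simp [Fin.val_succ, Fin.val_last, hi1]; omega)
      have hBval : Bmat K r (i1, u) = (K r (Fin.last s, u)).coeff 1 := by
        simp only [Bmat, Matrix.of_apply]
        rw [hsucc]
      rw [hBval, hK, hlast]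
      simp
  | cast i0 =>
    have hK : K r (i0.castSucc, u)
        = C ((K r (i0.castSucc, u)).coeff 1) * X + C ((K r (i0.castSucc, u)).coeff 0) :=
      eq_X_add_C_of_natDegree_le_one (hpencil r _)
    have hmid0 := hmid i0
    rcases Nat.eq_zero_or_pos (i0:ℕ) with hz | hz
    · have hsum : (∑ i : Fin s, C (Bmat K r (i, u)) * Lpoly F s i i0.castSucc)
          = C (Bmat K r (i0, u)) * (-1) := by
        rw [Finset.sum_eq_single i0]
        · simp [Lpoly]
        · intro i _ hi
          have hne : (i0:ℕ) ≠ (i:ℕ) := fun hc => hi (Fin.ext hc.symm)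
          simp only [Lpoly, Matrix.of_apply, Fin.coe_castSucc]
          rw [if_neg hne, if_neg (by omega), mul_zero]
        · simp
      rw [hsum]
      have e0 : i0.castSucc = (0 : Fin (s+1)) := Fin.ext (by simp [hz])
      have hc1 : (K r (i0.castSucc, u)).coeff 1 = 0 := by rw [e0]; exact hb0
      have hc0 : (K r (i0.castSucc, u)).coeff 0 = -(Bmat K r (i0, u)) := by
        have hB' : Bmat K r (i0, u) = (K r (i0.succ, u)).coeff 1 := rfl
        rw [hB']
        exact eq_neg_of_add_eq_zero_left hmid0
      rw [hK, hc1, hc0]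
      simp
    · obtain ⟨m, hm⟩ : ∃ m, (i0:ℕ) = m + 1 := ⟨(i0:ℕ) - 1, by omega⟩
      have hms : m < s := by have := i0.isLt; omega
      set i2 : Fin s := ⟨m, hms⟩ with hi2
      have hvi2 : (i2:ℕ) = m := rfl
      have hne12 : i0 ≠ i2 := by
        intro hc
        rw [hc] at hm
        omega
      have hsum : (∑ i : Fin s, C (Bmat K r (i, u)) * Lpoly F s i i0.castSucc)
          = C (Bmat K r (i0, u)) * Lpoly F s i0 i0.castSucc
            + C (Bmat K r (i2, u)) * Lpoly F s i2 i0.castSucc := by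
        refine sum_split _ i0 i2 ?_
        intro i
        by_cases hA : i = i0
        · subst hA
          rw [if_pos rfl, if_neg hne12, add_zero]
        · by_cases hB : i = i2
          · subst hB
            rw [if_pos rfl, if_neg (Ne.symm hne12), zero_add]
          · rw [if_neg hA, if_neg hB]
            have h1 : (i0:ℕ) ≠ (i:ℕ) := fun hc => hA (Fin.ext hc.symm)
            have h2 : (i0:ℕ) ≠ (i:ℕ) + 1 := by
              intro hc
              exact hB (Fin.ext (by omega))
            show C (Bmat K r (i, u)) * Lpoly F s i i0.castSucc = 0 + 0
            simp only [Lpoly, Matrix.of_apply, Fin.coe_castSucc]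
            rw [if_neg h1, if_neg h2, mul_zero, add_zero]
      rw [hsum]
      have hL0 : Lpoly F s i0 i0.castSucc = -1 := by
        simp [Lpoly]
      have hL2 : Lpoly F s i2 i0.castSucc = X := by
        simp only [Lpoly, Matrix.of_apply, Fin.coe_castSucc, hi2]
        rw [if_neg (by omega), if_pos (by omega)]
      have hc0 : (K r (i0.castSucc, u)).coeff 0 = -(Bmat K r (i0, u)) := by
        have hB' : Bmat K r (i0, u) = (K r (i0.succ, u)).coeff 1 := rfl
        rw [hB']
        exact eq_neg_of_add_eq_zero_left hmid0
      have hc1 : (K r (i0.castSucc, u)).coeff 1 = Bmat K r (i2, u) := by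
        have hcs : i0.castSucc = i2.succ := Fin.ext (by simp [Fin.coe_castSucc, Fin.val_succ, hi2]; omega)
        have : Bmat K r (i2, u) = (K r (i2.succ, u)).coeff 1 := rfl
        rw [this, hcs]
      rw [hK, hc0, hc1, hL0, hL2]
      rw [map_neg]
      ring

lemma Lrows_indep :
    LinearIndependent (RatFunc F) (fun x : Fin s × Fin n =>
      ratRow ((Lpoly F s ⊗ₖ (1 : Matrix (Fin n) (Fin n) (Polynomial F))) x)) := by
  rw [Fintype.linearIndependent_iff]
  intro g hg
  have hc : ∀ (j : Fin (s+1)) (u : Fin n),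
      ∑ i : Fin s, g (i, u) * algebraMap (Polynomial F) (RatFunc F) (Lpoly F s i j) = 0 := by
    intro j u
    have h := congrFun hg (j, u)
    simp only [Finset.sum_apply, Pi.smul_apply, Pi.zero_apply, smul_eq_mul, ratRow,
      kroneckerMap_apply, Matrix.one_apply, Fintype.sum_prod_type, _root_.map_mul, apply_ite,
      _root_.map_one, _root_.map_zero, mul_ite, mul_one, mul_zero, Finset.sum_ite_eq', Finset.mem_univ,
      if_true] at h
    exact h
  have main : ∀ k, ∀ i : Fin s, (i:ℕ) = k → ∀ u, g (i, u) = 0 := by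
    intro k
    induction k using Nat.strong_induction_on with
    | _ k IH =>
      intro i hik u
      have h := hc i.castSucc u
      have hsum : (∑ i' : Fin s,
          g (i', u) * algebraMap (Polynomial F) (RatFunc F) (Lpoly F s i' i.castSucc))
          = g (i, u) * algebraMap (Polynomial F) (RatFunc F) (-1 : Polynomial F) := by
        rw [Finset.sum_eq_single i]
        · simp [Lpoly]
        · intro i' _ hi'
          have hne : (i:ℕ) ≠ (i':ℕ) := fun hcc => hi' (Fin.ext hcc.symm)
          by_cases hc2 : (i:ℕ) = (i':ℕ) + 1
          · have hz : g (i', u) = 0 := IH (i':ℕ) (by omega) i' rfl u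
            rw [hz, zero_mul]
          · simp only [Lpoly, Matrix.of_apply, Fin.coe_castSucc]
            rw [if_neg hne, if_neg hc2, _root_.map_zero, mul_zero]
        · simp
      rw [hsum] at h
      simpa using h
  rintro ⟨i, u⟩
  exact main (i:ℕ) i rfl u

lemma Lamrows_indep :
    LinearIndependent (RatFunc F) (fun x : Fin 1 × Fin n =>
      ratRow ((LamPoly F s ⊗ₖ (1 : Matrix (Fin n) (Fin n) (Polynomial F))) x)) := by
  rw [Fintype.linearIndependent_iff]
  intro g hg x
  obtain ⟨o, u⟩ := x
  have h := congrFun hg (Fin.last s, u)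
  simp only [Finset.sum_apply, Pi.smul_apply, Pi.zero_apply, smul_eq_mul, ratRow,
    kroneckerMap_apply, Matrix.one_apply, LamPoly, Matrix.of_apply, Fintype.sum_prod_type,
    Fin.val_last, Nat.sub_self, pow_zero, _root_.map_mul, _root_.map_one, apply_ite, _root_.map_zero, one_mul,
    mul_ite, mul_one, mul_zero, Finset.sum_ite_eq', Finset.mem_univ, if_true] at h
  have ho : o = 0 := Subsingleton.elim o 0
  rw [ho]
  simpa using h

lemma Krows_indep (K : Matrix (Fin s × Fin n) (Fin (s+1) × Fin n) (Polynomial F))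
    (B : Matrix (Fin s × Fin n) (Fin s × Fin n) F) (hB : IsUnit B)
    (hKB : K = B.map C * (Lpoly F s ⊗ₖ (1 : Matrix (Fin n) (Fin n) (Polynomial F)))) :
    LinearIndependent (RatFunc F) (fun r => ratRow (K r)) := by
  rw [Fintype.linearIndependent_iff]
  intro g hg
  have hL := Fintype.linearIndependent_iff.mp (Lrows_indep (F := F) (s := s) (n := n))
  have key := hL (fun x => ∑ r, g r * phiF F (B r x)) ?_
  · have hM : IsUnit (B.map (phiF F)) := by
      have := hB.map (phiF F).mapMatrix
      simpa using this
    have hgM : g ᵥ* (B.map (phiF F)) = 0 := by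
      funext x
      simpa [Matrix.vecMul, dotProduct, Matrix.map_apply] using key x
    obtain ⟨U, hU⟩ := hM
    have hg0 : g = 0 := by
      calc g = g ᵥ* (1 : Matrix (Fin s × Fin n) (Fin s × Fin n) (RatFunc F)) :=
            (Matrix.vecMul_one g).symm
      _ = g ᵥ* ((B.map (phiF F)) * (↑U⁻¹ : Matrix (Fin s × Fin n) (Fin s × Fin n) (RatFunc F))) := by
            rw [← hU, Units.mul_inv]
      _ = (g ᵥ* (B.map (phiF F))) ᵥ* (↑U⁻¹ : Matrix (Fin s × Fin n) (Fin s × Fin n) (RatFunc F)) := by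
            rw [Matrix.vecMul_vecMul]
      _ = 0 := by rw [hgM, Matrix.zero_vecMul]
    intro r
    rw [hg0]
    rfl
  · rw [← hg]
    funext c
    simp only [Finset.sum_apply, Pi.smul_apply, smul_eq_mul, ratRow, hKB,
      Matrix.mul_apply, Matrix.map_apply, _root_.map_sum, _root_.map_mul]
    simp only [Finset.mul_sum]
    rw [Finset.sum_comm]
    refine Finset.sum_congr rfl fun x _ => ?_
    rw [Finset.sum_mul]
    refine Finset.sum_congr rfl fun r _ => ?_
    simp only [phiF, RingHom.comp_apply, RingHom.coe_coe]
    ring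

-- a row in the rowSpan of a wing pencil satisfies the same wing relation
lemma span_wing (K : Matrix (Fin s × Fin n) (Fin (s+1) × Fin n) (Polynomial F))
    (hwing : K * ((LamPoly F s)ᵀ ⊗ₖ (1 : Matrix (Fin n) (Fin n) (Polynomial F))) = 0)
    {v : Fin (s+1) × Fin n → Polynomial F} (hv : ratRow v ∈ rowSpan K) (u : Fin n) :
    ∑ j : Fin (s+1), v (j, u) * X ^ (s - (j:ℕ)) = 0 := by
  rw [rowSpan, Submodule.mem_span_range_iff_exists_fun] at hv
  obtain ⟨c, hc⟩ := hv
  apply RatFunc.algebraMap_injective F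
  rw [_root_.map_zero, _root_.map_sum]
  have hval : ∀ j : Fin (s+1), algebraMap (Polynomial F) (RatFunc F) (v (j, u))
      = ∑ r, c r * algebraMap (Polynomial F) (RatFunc F) (K r (j, u)) := by
    intro j
    have := congrFun hc (j, u)
    simp only [Finset.sum_apply, Pi.smul_apply, smul_eq_mul, ratRow] at this
    exact this.symm
  calc ∑ j : Fin (s+1), algebraMap (Polynomial F) (RatFunc F) (v (j, u) * X ^ (s - (j:ℕ)))
      = ∑ j : Fin (s+1), (∑ r, c r * algebraMap (Polynomial F) (RatFunc F) (K r (j, u)))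
          * algebraMap (Polynomial F) (RatFunc F) (X ^ (s - (j:ℕ))) := by
        refine Finset.sum_congr rfl fun j _ => ?_
        rw [_root_.map_mul, hval j]
    _ = ∑ r, c r * algebraMap (Polynomial F) (RatFunc F)
          (∑ j : Fin (s+1), K r (j, u) * X ^ (s - (j:ℕ))) := by
        simp only [_root_.map_sum, _root_.map_mul, Finset.mul_sum, Finset.sum_mul]
        rw [Finset.sum_comm]
        refine Finset.sum_congr rfl fun r _ => ?_
        refine Finset.sum_congr rfl fun j _ => ?_
        ring
    _ = 0 := by
        simp [wing_rows K hwing]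
  -- done

lemma one_le_rowDegree_of_wing {v : Fin (s+1) × Fin n → Polynomial F}
    (hrel : ∀ u, ∑ j : Fin (s+1), v (j, u) * X ^ (s - (j:ℕ)) = 0)
    (hne : v ≠ 0) : 1 ≤ rowDegree v := by
  by_contra hlt
  push_neg at hlt
  rw [rowDegree] at hlt
  have hdeg0 : ∀ c, (v c).natDegree = 0 := by
    intro c
    have h := Finset.le_sup (f := fun c => (v c).natDegree) (Finset.mem_univ c)
    omega
  apply hne
  funext c
  obtain ⟨j, u⟩ := c
  have hdeg : ∀ jj : Fin (s+1), (v (jj, u)).natDegree ≤ 1 := fun jj => by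
    rw [hdeg0]; omega
  have hc1 : ∀ jj : Fin (s+1), (v (jj, u)).coeff 1 = 0 := fun jj =>
    coeff_eq_zero_of_natDegree_lt (by rw [hdeg0]; omega)
  have hc0 : ∀ jj : Fin (s+1), (v (jj, u)).coeff 0 = 0 := by
    intro jj
    induction jj using Fin.lastCases with
    | last => exact rel_last (p := fun jj => v (jj, u)) (hrel u)
    | cast i0 =>
      have := rel_mid (p := fun jj => v (jj, u)) hdeg (hrel u) i0
      rw [hc1 i0.succ] at this
      simpa using this
  have : v (j, u) = C ((v (j, u)).coeff 0) := eq_C_of_natDegree_le_zero (by rw [hdeg0])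
  rw [this, hc0, _root_.map_zero]
  rfl

lemma card_eq_finrank {ι : Type*} [Fintype ι] {νt : Type*}
    {Q : Matrix ι νt (Polynomial F)}
    (h : LinearIndependent (RatFunc F) fun i => ratRow (Q i)) :
    Module.finrank (RatFunc F) (rowSpan Q) = Fintype.card ι := by
  rw [rowSpan]
  exact finrank_span_eq_card h

-- minimality of a wing pencil with independent rows
lemma min_wing (K : Matrix (Fin s × Fin n) (Fin (s+1) × Fin n) (Polynomial F))
    (hpencil : ∀ r c, (K r c).natDegree ≤ 1)
    (hwing : K * ((LamPoly F s)ᵀ ⊗ₖ (1 : Matrix (Fin n) (Fin n) (Polynomial F))) = 0)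
    (hind : LinearIndependent (RatFunc F) fun r => ratRow (K r)) :
    ∀ (m : ℕ) (R : Matrix (Fin m) (Fin (s+1) × Fin n) (Polynomial F)),
      LinearIndependent (RatFunc F) (fun i => ratRow (R i)) →
      rowSpan R = rowSpan K → polyOrder K ≤ polyOrder R := by
  intro m R hRind hspan
  have h1 : polyOrder K ≤ Fintype.card (Fin s × Fin n) := by
    rw [polyOrder]
    calc ∑ r : Fin s × Fin n, rowDegree (K r) ≤ ∑ _r : Fin s × Fin n, 1 :=
        Finset.sum_le_sum fun r _ => Finset.sup_le fun c _ => hpencil r c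
    _ = Fintype.card (Fin s × Fin n) := by simp
  have h2 : Fintype.card (Fin s × Fin n) = m := by
    rw [← card_eq_finrank hind, ← hspan, card_eq_finrank hRind, Fintype.card_fin]
  have h3 : m ≤ polyOrder R := by
    rw [polyOrder]
    calc m = ∑ _i : Fin m, 1 := by simp
    _ ≤ ∑ i, rowDegree (R i) := by
        refine Finset.sum_le_sum fun i _ => ?_
        have hmem : ratRow (R i) ∈ rowSpan K := by
          rw [← hspan, rowSpan]
          exact Submodule.subset_span ⟨i, rfl⟩
        have hne : R i ≠ 0 := by
          intro h0
          apply hRind.ne_zero i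
          funext c
          rw [ratRow, h0]
          simp
        exact one_le_rowDegree_of_wing (span_wing K hwing hmem) hne
  omega

-- minimality of Lam ⊗ 1
lemma min_lam :
    ∀ (m : ℕ) (R : Matrix (Fin m) (Fin (s+1) × Fin n) (Polynomial F)),
      LinearIndependent (RatFunc F) (fun i => ratRow (R i)) →
      rowSpan R = rowSpan (LamPoly F s ⊗ₖ (1 : Matrix (Fin n) (Fin n) (Polynomial F))) →
      polyOrder (LamPoly F s ⊗ₖ (1 : Matrix (Fin n) (Fin n) (Polynomial F))) ≤ polyOrder R := by
  intro m R hRind hspan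
  have h1 : polyOrder (LamPoly F s ⊗ₖ (1 : Matrix (Fin n) (Fin n) (Polynomial F)))
      ≤ Fintype.card (Fin 1 × Fin n) * s := by
    rw [polyOrder]
    calc ∑ x : Fin 1 × Fin n,
          rowDegree ((LamPoly F s ⊗ₖ (1 : Matrix (Fin n) (Fin n) (Polynomial F))) x)
        ≤ ∑ _x : Fin 1 × Fin n, s := by
          refine Finset.sum_le_sum fun x _ => Finset.sup_le fun c _ => ?_
          obtain ⟨o, t⟩ := x
          obtain ⟨j, u⟩ := c
          simp only [kroneckerMap_apply, LamPoly, Matrix.of_apply, Matrix.one_apply]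
          by_cases h : t = u
          · rw [if_pos h, mul_one, natDegree_X_pow]
            omega
          · rw [if_neg h, mul_zero, natDegree_zero]
            omega
    _ = Fintype.card (Fin 1 × Fin n) * s := by
          rw [Finset.sum_const, Finset.card_univ, smul_eq_mul]
  have h2 : Fintype.card (Fin 1 × Fin n) = m := by
    rw [← card_eq_finrank (Lamrows_indep (F := F) (s := s) (n := n)), ← hspan,
      card_eq_finrank hRind, Fintype.card_fin]
  have h3 : m * s ≤ polyOrder R := by
    rw [polyOrder]
    calc m * s = ∑ _i : Fin m, s := by simp [mul_comm]
    _ ≤ ∑ i, rowDegree (R i) := by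
        refine Finset.sum_le_sum fun i _ => ?_
        have hmem : ratRow (R i)
            ∈ rowSpan (LamPoly F s ⊗ₖ (1 : Matrix (Fin n) (Fin n) (Polynomial F))) := by
          rw [← hspan, rowSpan]
          exact Submodule.subset_span ⟨i, rfl⟩
        rw [rowSpan, Submodule.mem_span_range_iff_exists_fun] at hmem
        obtain ⟨c, hc⟩ := hmem
        have hval : ∀ (j : Fin (s+1)) (u : Fin n),
            algebraMap (Polynomial F) (RatFunc F) (R i (j, u))
              = c (0, u) * algebraMap (Polynomial F) (RatFunc F) ((X : Polynomial F) ^ (s - (j:ℕ))) := by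
          intro j u
          have h := congrFun hc (j, u)
          simp only [Finset.sum_apply, Pi.smul_apply, smul_eq_mul, ratRow, kroneckerMap_apply,
            LamPoly, Matrix.of_apply, Matrix.one_apply, Fintype.sum_prod_type, _root_.map_mul,
            apply_ite, _root_.map_one, _root_.map_zero, mul_ite, mul_one, mul_zero,
            Finset.sum_ite_eq', Finset.mem_univ, if_true, Fin.sum_univ_one] at h
          exact h.symm
        have hent : ∀ (j : Fin (s+1)) (u : Fin n),
            R i (j, u) = R i (Fin.last s, u) * X ^ (s - (j:ℕ)) := by
          intro j u
          apply RatFunc.algebraMap_injective F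
          rw [_root_.map_mul, hval j u, hval (Fin.last s) u]
          simp [Fin.val_last]
        have hne : R i ≠ 0 := by
          intro h0
          apply hRind.ne_zero i
          funext cc
          rw [ratRow, h0]
          simp
        obtain ⟨⟨j, u⟩, hju⟩ : ∃ cidx, R i cidx ≠ 0 := by
          by_contra hall
          push_neg at hall
          exact hne (funext hall)
        have hdne : R i (Fin.last s, u) ≠ 0 := by
          intro h0
          exact hju (by rw [hent j u, h0, zero_mul])
        have hnd : (R i ((0 : Fin (s+1)), u)).natDegree
            = (R i (Fin.last s, u)).natDegree + s := by
          rw [hent (0 : Fin (s+1)) u, natDegree_mul hdne (pow_ne_zero _ X_ne_zero),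
            natDegree_X_pow]
          norm_num
        have hle : (R i ((0 : Fin (s+1)), u)).natDegree ≤ rowDegree (R i) :=
          Finset.le_sup (f := fun cc => (R i cc).natDegree) (Finset.mem_univ _)
        omega
  rw [h2] at h1
  exact le_trans h1 h3

lemma Bmat_isUnit (K : Matrix (Fin s × Fin n) (Fin (s+1) × Fin n) (Polynomial F))
    (B : Matrix (Fin s × Fin n) (Fin s × Fin n) F)
    (hKB : K = B.map C * (Lpoly F s ⊗ₖ (1 : Matrix (Fin n) (Fin n) (Polynomial F))))
    (hind : LinearIndependent (RatFunc F) (fun r => ratRow (K r))) :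
    IsUnit B := by
  by_contra hnu
  have hdet : B.det = 0 := by
    by_contra hd
    exact hnu ((Matrix.isUnit_iff_isUnit_det _).mpr (isUnit_iff_ne_zero.mpr hd))
  obtain ⟨v, hv0, hvB⟩ := Matrix.exists_vecMul_eq_zero_iff.mpr hdet
  have hg := Fintype.linearIndependent_iff.mp hind (fun r => phiF F (v r)) ?_
  · apply hv0
    funext r
    have h0 : C (v r) = 0 := by
      apply RatFunc.algebraMap_injective F
      rw [_root_.map_zero]
      exact hg r
    have hvr : v r = 0 := by
      apply C_injective
      rw [h0, _root_.map_zero]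
    simpa using hvr
  · funext c
    simp only [Finset.sum_apply, Pi.smul_apply, smul_eq_mul, Pi.zero_apply, ratRow, hKB,
      Matrix.mul_apply, Matrix.map_apply, _root_.map_sum, _root_.map_mul]
    -- goal: ∑ r, phiF F (v r) * ∑ x, alg (C (B r x)) * alg (L' x c) = 0
    simp only [Finset.mul_sum]
    rw [Finset.sum_comm]
    have : ∀ x : Fin s × Fin n,
        (∑ r, phiF F (v r) * ((algebraMap (Polynomial F) (RatFunc F)) (C (B r x))
          * (algebraMap (Polynomial F) (RatFunc F))
            ((Lpoly F s ⊗ₖ (1 : Matrix (Fin n) (Fin n) (Polynomial F))) x c))) = 0 := by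
      intro x
      have hx : ∑ r, v r * B r x = 0 := by
        have hx0 := congrFun hvB x
        simpa [Matrix.vecMul, dotProduct] using hx0
      calc (∑ r, phiF F (v r) * ((algebraMap (Polynomial F) (RatFunc F)) (C (B r x))
          * (algebraMap (Polynomial F) (RatFunc F))
            ((Lpoly F s ⊗ₖ (1 : Matrix (Fin n) (Fin n) (Polynomial F))) x c)))
          = (∑ r, phiF F (v r * B r x)) * (algebraMap (Polynomial F) (RatFunc F))
            ((Lpoly F s ⊗ₖ (1 : Matrix (Fin n) (Fin n) (Polynomial F))) x c) := by
            rw [Finset.sum_mul]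
            refine Finset.sum_congr rfl fun r _ => ?_
            simp only [phiF, RingHom.comp_apply, RingHom.coe_coe, _root_.map_mul]
            ring
      _ = 0 := by
            rw [← _root_.map_sum, hx, _root_.map_zero, zero_mul]
    exact Finset.sum_eq_zero fun x _ => this x


end WingAux

/-- Theorem: an `(s,n)`-wing pencil `K(λ)` (a pencil with `K(λ)(Λ_s(λ)ᵀ ⊗ Iₙ) = 0`) is a
minimal basis dual to `Λ_s(λ) ⊗ Iₙ` if and only if `K(λ) = B (L_s(λ) ⊗ Iₙ)` for some
nonsingular constant matrix `B`. -/
theorem wing_pencil_dual_minimal_basis_iff (F : Type*) [Field F] (s n : ℕ)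
    (K : Matrix (Fin s × Fin n) (Fin (s+1) × Fin n) (Polynomial F))
    (hpencil : ∀ r c, (K r c).natDegree ≤ 1)
    (hwing : K * ((LamPoly F s)ᵀ ⊗ₖ (1 : Matrix (Fin n) (Fin n) (Polynomial F))) = 0) :
    (IsMinimalBasis K ∧
      IsMinimalBasis ((LamPoly F s) ⊗ₖ (1 : Matrix (Fin n) (Fin n) (Polynomial F))) ∧
      K * ((LamPoly F s) ⊗ₖ (1 : Matrix (Fin n) (Fin n) (Polynomial F)))ᵀ = 0) ↔
    ∃ B : Matrix (Fin s × Fin n) (Fin s × Fin n) F,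
      IsUnit B ∧
        K = B.map Polynomial.C *
          ((Lpoly F s) ⊗ₖ (1 : Matrix (Fin n) (Fin n) (Polynomial F))) := by
  constructor
  · rintro ⟨⟨hKind, -⟩, -, -⟩
    exact ⟨WingAux.Bmat K,
      WingAux.Bmat_isUnit K (WingAux.Bmat K) (WingAux.factor K hpencil hwing) hKind,
      WingAux.factor K hpencil hwing⟩
  · rintro ⟨B, hB, hKB⟩
    have hKind := WingAux.Krows_indep K B hB hKB
    refine ⟨⟨hKind, WingAux.min_wing K hpencil hwing hKind⟩,
      ⟨WingAux.Lamrows_indep, WingAux.min_lam⟩, ?_⟩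
    rw [← Matrix.kroneckerMap_transpose, Matrix.transpose_one]
    exact hwing
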